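/- Let (H, A) be a canonical pair of size N×N whose data satisfies λ₁ = λ₂ = … = λ_γ = λ for some nonzero λ. Then dim 𝒜 ≤ N(N−1)/2 + 1. -/

import Mathlib

open Matrix

noncomputable section

open scoped Classical

/-- The `m × m` upper-triangular Jordan block `J_{λ,m}` with eigenvalue `λ`. -/
def Jb (l : ℂ) (m : ℕ) : Matrix (Fin m) (Fin m) ℂ :=
  Matrix.of fun i j =>
    if (j : ℕ) = (i : ℕ) then l else if (j : ℕ) = (i : ℕ) + 1 then 1 else 0

/-- The `m × m` anti-diagonal matrix `S_m` ( `(i,j)` entry is `1` iff `i + j = m + 1`,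
1-based). -/
def Sb (m : ℕ) : Matrix (Fin m) (Fin m) ℂ :=
  Matrix.of fun i j => if (i : ℕ) + (j : ℕ) + 1 = m then 1 else 0

/-- The size `s(λ,m)` of the matrix `M_{λ,m}`: `m` if `λ ∈ ℝ`, and `2m` otherwise. -/
def sz (l : ℂ) (m : ℕ) : ℕ := if l.im = 0 then m else 2 * m

/-- The matrix `M_{λ,m}`: the Jordan block `J_{λ,m}` if `λ ∈ ℝ`, and the block matrix
`[[0, J_{λ²,m}], [I, 0]]` otherwise. -/
def Mb (l : ℂ) (m : ℕ) : Matrix (Fin (sz l m)) (Fin (sz l m)) ℂ :=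
  Matrix.of fun i j =>
    if l.im = 0 then
      (if (j : ℕ) = (i : ℕ) then l else if (j : ℕ) = (i : ℕ) + 1 then 1 else 0)
    else if (i : ℕ) < m ∧ m ≤ (j : ℕ) then
      (if (j : ℕ) - m = (i : ℕ) then l ^ 2
       else if (j : ℕ) - m = (i : ℕ) + 1 then 1 else 0)
    else if m ≤ (i : ℕ) ∧ (i : ℕ) - m = (j : ℕ) then 1 else 0

/-- The matrix `N_{λ,m}`: `S_m` if `λ ∈ ℝ` and `S_{2m}` otherwise. -/
def Nb (l : ℂ) (m : ℕ) : Matrix (Fin (sz l m)) (Fin (sz l m)) ℂ := Sb (sz l m)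

/-- A complex number is normalized if `Re λ ≥ 0` and, when `Re λ = 0`, also `Im λ ≥ 0`. -/
def Normalized (l : ℂ) : Prop := 0 ≤ l.re ∧ (l.re = 0 → 0 ≤ l.im)

/-- The linear map `B ↦ B * X + X * Bᵀ`. -/
def rmap {n : Type*} [Fintype n] (X : Matrix n n ℂ) :
    Matrix n n ℂ →ₗ[ℂ] Matrix n n ℂ where
  toFun B := B * X + X * Bᵀ
  map_add' B C := by
    simp only [Matrix.add_mul, Matrix.mul_add, Matrix.transpose_add]
    abel
  map_smul' c B := by
    simp only [Matrix.smul_mul, Matrix.mul_smul, Matrix.transpose_smul, smul_add,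
      RingHom.id_apply]

/-- The linear map `B ↦ Bᵀ * Y + Y * B`. -/
def lmap {n : Type*} [Fintype n] (Y : Matrix n n ℂ) :
    Matrix n n ℂ →ₗ[ℂ] Matrix n n ℂ where
  toFun B := Bᵀ * Y + Y * B
  map_add' B C := by
    simp only [Matrix.add_mul, Matrix.mul_add, Matrix.transpose_add]
    abel
  map_smul' c B := by
    simp only [Matrix.smul_mul, Matrix.mul_smul, Matrix.transpose_smul, smul_add,
      RingHom.id_apply]

/-- The subspace `𝒜°` associated with `(H, A)`:  matrices `B` with
`B·A·H⁻¹ + A·H⁻¹·Bᵀ = 0` and `Bᵀ·H·conj(A) + H·conj(A)·B = 0`. -/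
def scriptAo {n : Type*} [Fintype n] [DecidableEq n] (H A : Matrix n n ℂ) :
    Submodule ℂ (Matrix n n ℂ) :=
  LinearMap.ker (rmap (A * H⁻¹)) ⊓ LinearMap.ker (lmap (H * A.map (starRingEnd ℂ)))

/-- The subspace `𝒜` associated with `(H, A)`:  matrices `B` with
`B·A·H⁻¹ + A·H⁻¹·Bᵀ ∈ ℂ·(A·H⁻¹)` and `Bᵀ·H·conj(A) + H·conj(A)·B ∈ ℂ·(H·conj(A))`. -/
def scriptA {n : Type*} [Fintype n] [DecidableEq n] (H A : Matrix n n ℂ) :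
    Submodule ℂ (Matrix n n ℂ) :=
  Submodule.comap (rmap (A * H⁻¹)) (Submodule.span ℂ {A * H⁻¹}) ⊓
    Submodule.comap (lmap (H * A.map (starRingEnd ℂ)))
      (Submodule.span ℂ {H * A.map (starRingEnd ℂ)})

lemma card_lt_pairs (N : ℕ) :
    Fintype.card {p : Fin N × Fin N // p.1 < p.2} = N * (N - 1) / 2 := by
  have e2 : {p : Fin N × Fin N // p.1 < p.2} ≃ Σ b : Fin N, Fin (b : ℕ) :=
  { toFun := fun q => ⟨q.1.2, ⟨q.1.1.1, q.2⟩⟩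
    invFun := fun s => ⟨(⟨(s.2 : ℕ), lt_trans s.2.isLt s.1.isLt⟩, s.1), s.2.isLt⟩
    left_inv := fun q => rfl
    right_inv := fun s => rfl }
  rw [Fintype.card_congr e2, Fintype.card_sigma]
  simp only [Fintype.card_fin]
  rw [Fin.sum_univ_eq_sum_range (fun i => i) N, Finset.sum_range_id]

lemma finrank_comap_le {V W : Type*} [AddCommGroup V] [Module ℂ V] [AddCommGroup W]
    [Module ℂ W] [FiniteDimensional ℂ V] [FiniteDimensional ℂ W]
    (f : V →ₗ[ℂ] W) (p : Submodule ℂ W) :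
    Module.finrank ℂ ↥(Submodule.comap f p) ≤
      Module.finrank ℂ ↥(LinearMap.ker f) + Module.finrank ℂ ↥p := by
  set g := f.restrict (p := Submodule.comap f p) (q := p) (fun x hx => hx) with hg
  have h1 := LinearMap.finrank_range_add_finrank_ker g
  have h2 : Module.finrank ℂ ↥(LinearMap.range g) ≤ Module.finrank ℂ ↥p :=
    (LinearMap.range g).finrank_le
  have h3 : Module.finrank ℂ ↥(LinearMap.ker g) ≤ Module.finrank ℂ ↥(LinearMap.ker f) := by
    have hmem : ∀ x : ↥(LinearMap.ker g),
        ((Submodule.comap f p).subtype ∘ₗ (LinearMap.ker g).subtype) x ∈ LinearMap.ker f := by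
      intro x
      have hx := x.2
      rw [LinearMap.mem_ker] at hx ⊢
      have h' : ((g x.1 : ↥p) : W) = 0 := by rw [hx]; rfl
      exact h'
    have hinj : Function.Injective
        (LinearMap.codRestrict (LinearMap.ker f)
          ((Submodule.comap f p).subtype ∘ₗ (LinearMap.ker g).subtype) hmem) := by
      intro a b hab
      have h1 : ((a : ↥(Submodule.comap f p)) : V) = ((b : ↥(Submodule.comap f p)) : V) := by
        have := congrArg Subtype.val hab
        simpa [LinearMap.codRestrict_apply] using this
      exact Subtype.ext (Subtype.ext h1)
    exact LinearMap.finrank_le_finrank_of_injective hinj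
  omega

lemma sz_ne (μ : ℂ) (m : ℕ) (him : ¬ μ.im = 0) : sz μ m = 2 * m := by simp [sz, him]

lemma Sb_mul_Sb (k : ℕ) : Sb k * Sb k = (1 : Matrix (Fin k) (Fin k) ℂ) := by
  ext i j
  have hi := i.isLt
  have hj := j.isLt
  rw [Matrix.mul_apply, Finset.sum_eq_single (⟨k - 1 - (i : ℕ), by omega⟩ : Fin k)]
  · have h1 : Sb k i ⟨k - 1 - (i : ℕ), by omega⟩ = 1 := by
      simp only [Sb, Matrix.of_apply]
      rw [if_pos (show (i : ℕ) + (k - 1 - (i : ℕ)) + 1 = k by omega)]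
    rw [h1, one_mul]
    by_cases hij : i = j
    · subst hij
      rw [Matrix.one_apply_eq]
      simp only [Sb, Matrix.of_apply]
      rw [if_pos (show k - 1 - (i : ℕ) + (i : ℕ) + 1 = k by omega)]
    · rw [Matrix.one_apply_ne (fun h => hij (by
        exact Fin.ext (show (i:ℕ) = (j:ℕ) by
          have := Fin.val_eq_val (⟨k - 1 - (i : ℕ), by omega⟩ : Fin k) j
          omega)))]
      have hij' : (i : ℕ) ≠ (j : ℕ) := fun h => hij (Fin.ext h)
      simp only [Sb, Matrix.of_apply]
      rw [if_neg (show ¬(k - 1 - (i : ℕ) + (j : ℕ) + 1 = k) by omega)]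
  · intro b _ hb
    have hb' : (b : ℕ) ≠ k - 1 - (i : ℕ) := fun h => hb (Fin.ext h)
    simp only [Sb, Matrix.of_apply]
    rw [if_neg (by omega), zero_mul]
  · intro h; exact absurd (Finset.mem_univ _) h

lemma smulS_mul_smulS (ε : ℂ) (hε : ε = 1 ∨ ε = -1) (k : ℕ) :
    (ε • Sb k) * (ε • Sb k) = 1 := by
  rw [Matrix.smul_mul, Matrix.mul_smul, smul_smul, Sb_mul_Sb]
  rcases hε with h | h <;> simp [h]

lemma Mb_entry_symm (μ : ℂ) (m : ℕ) (i j i' j' : Fin (sz μ m))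
    (hi' : (i' : ℕ) = sz μ m - 1 - (i : ℕ)) (hj' : (j' : ℕ) = sz μ m - 1 - (j : ℕ)) :
    Mb μ m j i' = Mb μ m i j' := by
  have hi := i.isLt
  have hj := j.isLt
  simp only [Mb, Matrix.of_apply]
  split_ifs
  all_goals try rfl
  all_goals exfalso
  all_goals try omega
  all_goals (have hm := sz_ne μ m ‹¬ μ.im = 0›; omega)

lemma Mb_mul_S_symm (μ : ℂ) (m : ℕ) :
    (Mb μ m * Sb (sz μ m))ᵀ = Mb μ m * Sb (sz μ m) := by
  have key : ∀ i j : Fin (sz μ m),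
      (Mb μ m * Sb (sz μ m)) i j
        = Mb μ m i ⟨sz μ m - 1 - (j : ℕ), by have := j.isLt; omega⟩ := by
    intro i j
    have hj := j.isLt
    rw [Matrix.mul_apply, Finset.sum_eq_single
      (⟨sz μ m - 1 - (j : ℕ), by omega⟩ : Fin (sz μ m))]
    · have h1 : Sb (sz μ m) ⟨sz μ m - 1 - (j : ℕ), by omega⟩ j = 1 := by
        simp only [Sb, Matrix.of_apply]
        rw [if_pos (show sz μ m - 1 - (j : ℕ) + (j : ℕ) + 1 = sz μ m by omega)]
      rw [h1, mul_one]
    · intro b _ hb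
      have hb' : (b : ℕ) ≠ sz μ m - 1 - (j : ℕ) := fun h => hb (Fin.ext h)
      have h1 : Sb (sz μ m) b j = 0 := by
        simp only [Sb, Matrix.of_apply]
        rw [if_neg (by omega)]
      rw [h1, mul_zero]
    · intro h; exact absurd (Finset.mem_univ _) h
  ext i j
  rw [Matrix.transpose_apply, key, key]
  exact Mb_entry_symm μ m i j _ _ rfl rfl

lemma Mb_det_ne (μ : ℂ) (hμ : μ ≠ 0) (m : ℕ) : (Mb μ m).det ≠ 0 := by
  by_cases him : μ.im = 0
  · have htri : (Mb μ m).BlockTriangular id := by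
      intro i j hij
      have hij' : (j : ℕ) < (i : ℕ) := hij
      simp only [Mb, Matrix.of_apply, if_pos him]
      split_ifs
      all_goals try rfl
      all_goals (exfalso; omega)
    rw [Matrix.det_of_upperTriangular htri]
    have hd : ∀ i ∈ Finset.univ, Mb μ m i i = μ := by
      intro i _; simp [Mb, him]
    rw [Finset.prod_congr rfl hd, Finset.prod_const]
    exact pow_ne_zero _ hμ
  · have hi2 : ∀ i : Fin (sz μ m), (i : ℕ) < 2 * m := fun i => by
      have := i.isLt; simpa [sz, him] using this
    have htri : (Mb μ m * Mb μ m).BlockTriangular id := by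
      intro i j hij
      rw [Matrix.mul_apply]
      apply Finset.sum_eq_zero
      intro k _
      have h1 := hi2 i; have h2 := hi2 j; have h3 := hi2 k
      have hij' : (j : ℕ) < (i : ℕ) := hij
      simp only [Mb, Matrix.of_apply, if_neg him, Fin.val_mk]
      split_ifs
      all_goals try ring
      all_goals (exfalso; omega)
    have hdiag : ∀ i ∈ Finset.univ, (Mb μ m * Mb μ m) i i = μ ^ 2 := by
      intro i _
      have h1 := hi2 i
      rw [Matrix.mul_apply]
      by_cases hi : (i : ℕ) < m
      · rw [Finset.sum_eq_single (⟨(i : ℕ) + m,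
            by have h5 := sz_ne μ m him; omega⟩ : Fin (sz μ m))]
        · simp only [Mb, Matrix.of_apply, if_neg him, Fin.val_mk]
          split_ifs
          all_goals try ring
          all_goals exfalso
          all_goals try simp only [and_true, true_and, not_true] at *
          all_goals omega
        · intro b _ hb
          have hb' : (b : ℕ) ≠ (i : ℕ) + m := fun h => hb (Fin.ext h)
          have h4 := hi2 b
          simp only [Mb, Matrix.of_apply, if_neg him, Fin.val_mk]
          split_ifs
          all_goals try ring
          all_goals exfalso
          all_goals try simp only [and_true, true_and, not_true] at *
          all_goals omega
        · intro h; exact absurd (Finset.mem_univ _) h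
      · rw [Finset.sum_eq_single (⟨(i : ℕ) - m,
            by have h5 := sz_ne μ m him; omega⟩ : Fin (sz μ m))]
        · simp only [Mb, Matrix.of_apply, if_neg him, Fin.val_mk]
          split_ifs
          all_goals try ring
          all_goals exfalso
          all_goals try simp only [and_true, true_and, not_true] at *
          all_goals omega
        · intro b _ hb
          have hb' : (b : ℕ) ≠ (i : ℕ) - m := fun h => hb (Fin.ext h)
          have h4 := hi2 b
          simp only [Mb, Matrix.of_apply, if_neg him, Fin.val_mk]
          split_ifs
          all_goals try ring
          all_goals exfalso
          all_goals try simp only [and_true, true_and, not_true] at *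
          all_goals omega
        · intro h; exact absurd (Finset.mem_univ _) h
    have hdet : (Mb μ m).det * (Mb μ m).det ≠ 0 := by
      rw [← Matrix.det_mul, Matrix.det_of_upperTriangular htri,
        Finset.prod_congr rfl hdiag, Finset.prod_const]
      exact pow_ne_zero _ (pow_ne_zero _ hμ)
    exact fun h => hdet (by rw [h, mul_zero])

lemma key_bound {n : Type*} [Fintype n] [DecidableEq n] (X : Matrix n n ℂ)
    (hX : Xᵀ = X) (hU : IsUnit X) :
    Module.finrank ℂ ↥(Submodule.comap (rmap X) (Submodule.span ℂ {X})) ≤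
      Fintype.card n * (Fintype.card n - 1) / 2 + 1 := by
  have hXinv : X * X⁻¹ = 1 := Matrix.mul_nonsing_inv _ ((Matrix.isUnit_iff_isUnit_det _).mp hU)
  set N := Fintype.card n with hN
  set e := Fintype.equivFin n with he
  have hspan : Module.finrank ℂ ↥(Submodule.span ℂ ({X} : Set (Matrix n n ℂ))) ≤ 1 := by
    rw [LinearMap.span_singleton_eq_range]
    calc Module.finrank ℂ ↥(LinearMap.range (LinearMap.toSpanSingleton ℂ _ X))
        ≤ Module.finrank ℂ ℂ := LinearMap.finrank_range_le _
      _ = 1 := Module.finrank_self ℂ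
  have hker : Module.finrank ℂ ↥(LinearMap.ker (rmap X)) ≤ N * (N - 1) / 2 := by
    set φ : ↥(LinearMap.ker (rmap X)) →ₗ[ℂ] ({p : Fin N × Fin N // p.1 < p.2} → ℂ) :=
    { toFun := fun B q => ((B : Matrix n n ℂ) * X) (e.symm q.1.1) (e.symm q.1.2)
      map_add' := fun B C => by
        funext q
        simp [Matrix.add_mul]
      map_smul' := fun c B => by
        funext q
        simp [Matrix.smul_mul] } with hφ
    have h0 : ∀ B, φ B = 0 → B = 0 := by
      intro B hB
      have hk : (B : Matrix n n ℂ) * X + X * (B : Matrix n n ℂ)ᵀ = 0 := B.2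
      have htr : X * (B : Matrix n n ℂ)ᵀ = ((B : Matrix n n ℂ) * X)ᵀ := by
        rw [Matrix.transpose_mul, hX]
      have hskew : ∀ i j, ((B : Matrix n n ℂ) * X) j i = -(((B : Matrix n n ℂ) * X) i j) := by
        intro i j
        have h1 := congrFun (congrFun hk i) j
        rw [htr] at h1
        simp only [Matrix.add_apply, Matrix.transpose_apply, Matrix.zero_apply] at h1
        linear_combination h1
      have hzero : ∀ i j, ((B : Matrix n n ℂ) * X) i j = 0 := by
        intro i j
        rcases lt_trichotomy (e i) (e j) with h | h | h
        · have h2 := congrFun hB ⟨(e i, e j), h⟩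
          simp only [hφ, LinearMap.coe_mk, AddHom.coe_mk, Equiv.symm_apply_apply,
            Pi.zero_apply] at h2
          exact h2
        · have hij : i = j := e.injective h
          subst hij
          have h2 := hskew i i
          have h3 : ((B : Matrix n n ℂ) * X) i i + ((B : Matrix n n ℂ) * X) i i = 0 := by
            linear_combination h2
          exact add_self_eq_zero.mp h3
        · have h2 := congrFun hB ⟨(e j, e i), h⟩
          simp only [hφ, LinearMap.coe_mk, AddHom.coe_mk, Equiv.symm_apply_apply,
            Pi.zero_apply] at h2
          have h3 : ((B : Matrix n n ℂ) * X) j i = 0 := h2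
          rw [hskew i j] at h3  -- hskew i j : (BX) j i = -(BX) i j ... careful
          linear_combination -h3
      have hBX : (B : Matrix n n ℂ) * X = 0 := by
        ext i j; exact hzero i j
      have hBv : (B : Matrix n n ℂ) = 0 := by
        calc (B : Matrix n n ℂ) = (B : Matrix n n ℂ) * (X * X⁻¹) := by rw [hXinv, Matrix.mul_one]
          _ = ((B : Matrix n n ℂ) * X) * X⁻¹ := by rw [Matrix.mul_assoc]
          _ = 0 := by rw [hBX, Matrix.zero_mul]
      exact Subtype.ext hBv
    have hinj : Function.Injective φ := by
      rw [injective_iff_map_eq_zero φ] at *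
      · exact h0
    have hle := LinearMap.finrank_le_finrank_of_injective hinj
    rwa [Module.finrank_pi, card_lt_pairs] at hle
  have h1 := finrank_comap_le (rmap X) (Submodule.span ℂ ({X} : Set (Matrix n n ℂ)))
  omega

/-- For a canonical pair `(H, A)` of size `N × N` all of whose
parameters `λᵢ` equal a common nonzero `λ`, `dim 𝒜 ≤ N(N−1)/2 + 1`. -/
theorem stmt15 (γ : ℕ) (hγ : 0 < γ) (lam : Fin γ → ℂ) (mm : Fin γ → ℕ) (eps : Fin γ → ℂ)
    (hnorm : ∀ i, Normalized (lam i)) (hm : ∀ i, 0 < mm i)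
    (heps : ∀ i, eps i = 1 ∨ eps i = -1)
    (l : ℂ) (hl : l ≠ 0) (hlam : ∀ i, lam i = l)
    (H A : Matrix ((i : Fin γ) × Fin (sz (lam i) (mm i)))
      ((i : Fin γ) × Fin (sz (lam i) (mm i))) ℂ)
    (hH : H = Matrix.blockDiagonal' fun i => eps i • Nb (lam i) (mm i))
    (hA : A = Matrix.blockDiagonal' fun i => Mb (lam i) (mm i)) :
    Module.finrank ℂ ↥(scriptA H A) ≤
      Fintype.card ((i : Fin γ) × Fin (sz (lam i) (mm i))) *
        (Fintype.card ((i : Fin γ) × Fin (sz (lam i) (mm i))) - 1) / 2 + 1 := by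
  subst hH hA
  have hHH : (blockDiagonal' fun i => eps i • Nb (lam i) (mm i)) *
      (blockDiagonal' fun i => eps i • Nb (lam i) (mm i)) = 1 := by
    rw [← Matrix.blockDiagonal'_mul]
    rw [show (fun i => (eps i • Nb (lam i) (mm i)) * (eps i • Nb (lam i) (mm i)))
        = fun i => (1 : Matrix (Fin (sz (lam i) (mm i))) (Fin (sz (lam i) (mm i))) ℂ) from
      funext fun i => smulS_mul_smulS (eps i) (heps i) _]
    exact Matrix.blockDiagonal'_one
  have hHinv : (blockDiagonal' fun i => eps i • Nb (lam i) (mm i))⁻¹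
      = blockDiagonal' fun i => eps i • Nb (lam i) (mm i) :=
    Matrix.inv_eq_right_inv hHH
  set Z : ∀ i : Fin γ, Matrix (Fin (sz (lam i) (mm i))) (Fin (sz (lam i) (mm i))) ℂ :=
    fun i => Mb (lam i) (mm i) * (eps i • Sb (sz (lam i) (mm i))) with hZ
  have hX : (blockDiagonal' fun i => Mb (lam i) (mm i)) *
      (blockDiagonal' fun i => eps i • Nb (lam i) (mm i))⁻¹ = blockDiagonal' Z := by
    rw [hHinv, ← Matrix.blockDiagonal'_mul]
    rfl
  have hZsymm : ∀ i, (Z i)ᵀ = Z i := by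
    intro i
    show (Mb (lam i) (mm i) * (eps i • Sb (sz (lam i) (mm i))))ᵀ
        = Mb (lam i) (mm i) * (eps i • Sb (sz (lam i) (mm i)))
    rw [Matrix.mul_smul, Matrix.transpose_smul, Mb_mul_S_symm]
  have hXt : (blockDiagonal' Z)ᵀ = blockDiagonal' Z := by
    rw [Matrix.blockDiagonal'_transpose]
    exact congrArg _ (funext hZsymm)
  have hZu : ∀ i, IsUnit (Z i).det := by
    intro i
    have h1 : (Mb (lam i) (mm i)).det ≠ 0 := Mb_det_ne _ (by rw [hlam i]; exact hl) _
    have h2 : ((eps i • Sb (sz (lam i) (mm i))) * (eps i • Sb (sz (lam i) (mm i)))) = 1 :=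
      smulS_mul_smulS _ (heps i) _
    have h3 : (eps i • Sb (sz (lam i) (mm i))).det ≠ 0 := by
      intro h0
      have h4 := congrArg Matrix.det h2
      rw [Matrix.det_mul, h0, mul_zero, Matrix.det_one] at h4
      exact zero_ne_one h4
    have h5 : (Z i).det ≠ 0 := by
      show (Mb (lam i) (mm i) * (eps i • Sb (sz (lam i) (mm i)))).det ≠ 0
      rw [Matrix.det_mul]
      exact mul_ne_zero h1 h3
    exact isUnit_iff_ne_zero.mpr h5
  have hXu : IsUnit (blockDiagonal' Z) := by
    refine (Matrix.isUnit_iff_isUnit_det _).mpr (Matrix.isUnit_det_of_right_inverse (B := blockDiagonal' fun i => (Z i)⁻¹) ?_)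
    rw [← Matrix.blockDiagonal'_mul]
    rw [show (fun i => Z i * (Z i)⁻¹)
        = fun i => (1 : Matrix (Fin (sz (lam i) (mm i))) (Fin (sz (lam i) (mm i))) ℂ) from
      funext fun i => Matrix.mul_nonsing_inv _ (hZu i)]
    exact Matrix.blockDiagonal'_one
  have hmono : Module.finrank ℂ
      ↥(scriptA (blockDiagonal' fun i => eps i • Nb (lam i) (mm i))
          (blockDiagonal' fun i => Mb (lam i) (mm i))) ≤
      Module.finrank ℂ
      ↥(Submodule.comap
        (rmap ((blockDiagonal' fun i => Mb (lam i) (mm i)) *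
          (blockDiagonal' fun i => eps i • Nb (lam i) (mm i))⁻¹))
        (Submodule.span ℂ {(blockDiagonal' fun i => Mb (lam i) (mm i)) *
          (blockDiagonal' fun i => eps i • Nb (lam i) (mm i))⁻¹})) :=
    Submodule.finrank_mono inf_le_left
  rw [hX] at hmono
  exact le_trans hmono (key_bound _ hXt hXu)
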